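/- Under hypotheses H(A), H(J), H(γ,f) and (H_s), every solution of Problem P_opt solves Problem P_incl: if u ∈ V satisfies 0 ∈ ∂₂ℒ(u,u), then there exists z ∈ ∂₂J(γu, γu) such that ⟨Au, v⟩ + ⟨z, γv⟩ = ⟨f, v⟩ for all v ∈ V. -/

import Mathlib

open Filter Topology
open scoped NNReal

/-- Clarke generalized directional derivative of `j` at `x` in direction `v`. -/
noncomputable def clarkeDeriv {Y : Type*} [NormedAddCommGroup Y] [NormedSpace ℝ Y]
    (j : Y → ℝ) (x v : Y) : ℝ :=
  Filter.limsup (fun p : Y × ℝ => (j (p.1 + p.2 • v) - j p.1) / p.2)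
    ((nhds x) ×ˢ (nhdsWithin (0 : ℝ) (Set.Ioi (0 : ℝ))))

/-- Clarke generalized subdifferential of `j` at `x`. -/
noncomputable def clarkeSubdiff {Y : Type*} [NormedAddCommGroup Y] [NormedSpace ℝ Y]
    (j : Y → ℝ) (x : Y) : Set (Y →L[ℝ] ℝ) :=
  {ξ : Y →L[ℝ] ℝ | ∀ v : Y, ξ v ≤ clarkeDeriv j x v}

section Aux

lemma limsup_map_eq' {α β γ : Type*} [ConditionallyCompleteLattice γ] (m : α → β) (u : β → γ)
    (l : Filter α) : limsup u (Filter.map m l) = limsup (u ∘ m) l := by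
  simp only [Filter.limsup, Filter.map_map]

lemma map_mul_nhdsWithin_Ioi {c : ℝ} (hc : 0 < c) :
    Filter.map (fun s => c * s) (𝓝[>] (0:ℝ)) = 𝓝[>] (0:ℝ) := by
  have T : ∀ a : ℝ, 0 < a → Tendsto (fun s => a * s) (𝓝[>] (0:ℝ)) (𝓝[>] (0:ℝ)) := by
    intro a ha
    rw [tendsto_nhdsWithin_iff]
    constructor
    · have := ((continuous_mul_left a).tendsto 0).mono_left
        (nhdsWithin_le_nhds (s := Set.Ioi (0:ℝ)))
      simpa using this
    · filter_upwards [self_mem_nhdsWithin] with s hs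
      exact mul_pos ha hs
  apply le_antisymm (T c hc)
  have hcomp : (fun s => c * s) ∘ (fun s => c⁻¹ * s) = id := by
    funext s; simp [Function.comp, ← mul_assoc, mul_inv_cancel₀ hc.ne']
  conv_lhs => rw [← Filter.map_id (f := 𝓝[>](0:ℝ)), ← hcomp, ← Filter.map_map]
  exact map_mono (T c⁻¹ (by positivity))

lemma line_deriv_shift {V : Type*} [NormedAddCommGroup V] [NormedSpace ℝ V]
    (A : V → V →L[ℝ] ℝ) (F_A : V → ℝ)
    (hA_pot : ∀ u v : V, HasLineDerivAt ℝ F_A (A u v) u v)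
    (y v : V) (t : ℝ) :
    HasDerivAt (fun s => F_A (y + s • v)) (A (y + t • v) v) t := by
  have h0 : HasDerivAt (fun s : ℝ => F_A (y + t • v + s • v)) (A (y + t • v) v) (t - t) := by
    rw [sub_self]; exact hA_pot (y + t • v) v
  have h2 := h0.comp_sub_const t t
  have heq : (fun s : ℝ => F_A (y + t • v + (s - t) • v)) = fun s => F_A (y + s • v) := by
    funext s; congr 1; module
  simpa only [heq] using h2

lemma QF_tendsto {V : Type*} [NormedAddCommGroup V] [NormedSpace ℝ V]
    (A : V → V →L[ℝ] ℝ) (F_A : V → ℝ) (L_A : ℝ) (hL_A : 0 < L_A)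
    (hA_lip : ∀ u v : V, ‖A u - A v‖ ≤ L_A * ‖u - v‖)
    (hA_pot : ∀ u v : V, HasLineDerivAt ℝ F_A (A u v) u v)
    (u v : V) :
    Tendsto (fun q : V × ℝ => (F_A (q.1 + q.2 • v) - F_A q.1) / q.2)
      ((𝓝 u) ×ˢ (𝓝[>] (0:ℝ))) (𝓝 (A u v)) := by
  have hder := line_deriv_shift A F_A hA_pot
  set lV : Filter (V × ℝ) := (𝓝 u) ×ˢ (𝓝[>] (0:ℝ)) with hlV
  have hpos : ∀ᶠ q : V × ℝ in lV, q.2 ∈ Set.Ioi (0:ℝ) := by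
    rw [hlV]
    exact Filter.Eventually.prod_mk (Eventually.of_forall fun _ => trivial)
      self_mem_nhdsWithin |>.mono fun q h => h.2
  have hbound : ∀ᶠ q : V × ℝ in lV,
      ‖(F_A (q.1 + q.2 • v) - F_A q.1) / q.2 - A u v‖
        ≤ L_A * (‖q.1 - u‖ + q.2 * ‖v‖) * ‖v‖ := by
    filter_upwards [hpos] with q hq
    obtain ⟨y, s⟩ := q
    simp only at hq ⊢
    have hs : (0:ℝ) < s := hq
    set C := L_A * (‖y - u‖ + s * ‖v‖) * ‖v‖ with hC
    have hderW : ∀ t ∈ Set.Icc (0:ℝ) s,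
        HasDerivWithinAt (fun t => F_A (y + t • v) - t * (A u v))
          (A (y + t • v) v - A u v) (Set.Icc 0 s) t := by
      intro t _
      exact ((hder y v t).sub (hasDerivAt_mul_const (A u v))).hasDerivWithinAt
    have hbnd : ∀ t ∈ Set.Ico (0:ℝ) s, ‖A (y + t • v) v - A u v‖ ≤ C := by
      intro t ht
      have h1 : A (y + t • v) v - A u v = (A (y + t • v) - A u) v := by
        simp [ContinuousLinearMap.sub_apply]
      rw [h1]
      calc ‖(A (y + t • v) - A u) v‖ ≤ ‖A (y + t • v) - A u‖ * ‖v‖ :=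
            (A (y + t • v) - A u).le_opNorm v
        _ ≤ (L_A * ‖y + t • v - u‖) * ‖v‖ :=
            mul_le_mul_of_nonneg_right (hA_lip _ _) (norm_nonneg v)
        _ ≤ C := by
            have h2 : ‖y + t • v - u‖ ≤ ‖y - u‖ + s * ‖v‖ := by
              calc ‖y + t • v - u‖ = ‖(y - u) + t • v‖ := by rw [add_sub_right_comm]
                _ ≤ ‖y - u‖ + ‖t • v‖ := norm_add_le _ _
                _ = ‖y - u‖ + t * ‖v‖ := by rw [norm_smul, Real.norm_of_nonneg ht.1]
                _ ≤ ‖y - u‖ + s * ‖v‖ := by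
                    have := mul_le_mul_of_nonneg_right ht.2.le (norm_nonneg v)
                    linarith
            rw [hC]
            exact mul_le_mul_of_nonneg_right
              (mul_le_mul_of_nonneg_left h2 hL_A.le) (norm_nonneg v)
    have hmvt := norm_image_sub_le_of_norm_deriv_le_segment' hderW hbnd s
      ⟨hs.le, le_refl s⟩
    simp only [zero_smul, add_zero, zero_mul, sub_zero] at hmvt
    have hrw : (F_A (y + s • v) - F_A y) / s - A u v
        = (F_A (y + s • v) - s * A u v - F_A y) / s := by
      field_simp
      ring
    rw [hrw, Real.norm_eq_abs, abs_div, abs_of_pos hs, div_le_iff₀ hs]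
    calc |F_A (y + s • v) - s * A u v - F_A y|
        = ‖F_A (y + s • v) - s * A u v - F_A y‖ := rfl
      _ ≤ C * s := by
          have h3 : F_A (y + s • v) - s * A u v - F_A y
              = (F_A (y + s • v) - s * A u v) - F_A y := by ring
          rw [h3]; exact hmvt
  have htend0 : Tendsto (fun q : V × ℝ => L_A * (‖q.1 - u‖ + q.2 * ‖v‖) * ‖v‖) lV (𝓝 0) := by
    have h1 : Tendsto (fun q : V × ℝ => q.1) lV (𝓝 u) := tendsto_fst
    have h2 : Tendsto (fun q : V × ℝ => q.2) lV (𝓝 0) :=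
      tendsto_snd.mono_right nhdsWithin_le_nhds
    have := ((((h1.sub_const u).norm).add (h2.mul_const ‖v‖)).const_mul L_A).mul_const ‖v‖
    simpa using this
  have hsq := squeeze_zero_norm' hbound htend0
  have := hsq.add_const (A u v)
  simpa using this

lemma clarke_ev_bound {X : Type*} [NormedAddCommGroup X] [NormedSpace ℝ X] {j : X → ℝ} {x₀ : X}
    {K : ℝ≥0} {r : ℝ} (hr : 0 < r) (hK : LipschitzOnWith K j (Metric.ball x₀ r)) (d : X) :
    ∀ᶠ q : X × ℝ in (𝓝 x₀) ×ˢ (𝓝[>] (0:ℝ)),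
      |(j (q.1 + q.2 • d) - j q.1) / q.2| ≤ (K : ℝ) * ‖d‖ := by
  set ε := r / (2 * (‖d‖ + 1)) with hε
  have hd1 : (0:ℝ) < ‖d‖ + 1 := by positivity
  have hεpos : 0 < ε := by positivity
  have h1 : ∀ᶠ y in 𝓝 x₀, y ∈ Metric.ball x₀ (r/2) := by
    filter_upwards [Metric.ball_mem_nhds x₀ (by positivity : (0:ℝ) < r/2)] with y hy using hy
  have h2 : ∀ᶠ s in 𝓝[>] (0:ℝ), s ∈ Set.Ioo 0 ε :=
    Ioo_mem_nhdsGT hεpos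
  filter_upwards [h1.prod_mk h2]
  rintro ⟨y, s⟩ ⟨hy, hs0, hsε⟩
  simp only at hy hs0 hsε ⊢
  have hsd : s * ‖d‖ ≤ r / 2 := by
    have h3 : s * ‖d‖ ≤ ε * (‖d‖ + 1) :=
      mul_le_mul hsε.le (by linarith [norm_nonneg d]) (norm_nonneg d) hεpos.le
    have h4 : ε * (‖d‖ + 1) = r / 2 := by
      rw [hε]; field_simp
    linarith
  rw [Metric.mem_ball, dist_eq_norm] at hy
  have hy1 : y ∈ Metric.ball x₀ r := by
    rw [Metric.mem_ball, dist_eq_norm]; linarith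
  have hy2 : y + s • d ∈ Metric.ball x₀ r := by
    rw [Metric.mem_ball, dist_eq_norm]
    calc ‖y + s • d - x₀‖ = ‖(y - x₀) + s • d‖ := by rw [add_sub_right_comm]
      _ ≤ ‖y - x₀‖ + ‖s • d‖ := norm_add_le _ _
      _ = ‖y - x₀‖ + s * ‖d‖ := by rw [norm_smul, Real.norm_of_nonneg hs0.le]
      _ < r := by linarith
  have hlip := hK.dist_le_mul _ hy2 _ hy1
  rw [Real.dist_eq, dist_eq_norm] at hlip
  have h5 : ‖y + s • d - y‖ = s * ‖d‖ := by
    simp [norm_smul, Real.norm_of_nonneg hs0.le]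
  rw [h5] at hlip
  rw [abs_div, abs_of_pos hs0, div_le_iff₀ hs0]
  calc |j (y + s • d) - j y| ≤ (K:ℝ) * (s * ‖d‖) := hlip
    _ = (K:ℝ) * ‖d‖ * s := by ring

end Aux

theorem stmt7
    {V : Type*} [NormedAddCommGroup V] [NormedSpace ℝ V] [CompleteSpace V]
    {X : Type*} [NormedAddCommGroup X] [NormedSpace ℝ X] [CompleteSpace X]
    (hV_refl : Function.Surjective (NormedSpace.inclusionInDoubleDual ℝ V))
    (A : V → V →L[ℝ] ℝ) (F_A : V → ℝ) (L_A : ℝ) (hL_A : 0 < L_A)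
    (hA_lip : ∀ u v : V, ‖A u - A v‖ ≤ L_A * ‖u - v‖)
    (hA_pot : ∀ u v : V, HasLineDerivAt ℝ F_A (A u v) u v)
    (m_A : ℝ) (hm_A : 0 < m_A)
    (hA_mono : ∀ u v : V, m_A * ‖u - v‖ ^ 2 ≤ (A u - A v) (u - v))
    (J : X → X → ℝ)
    (hJ_lip : ∀ w : X, LocallyLipschitz (J w))
    (c₀ c₁ c₂ : ℝ) (hc₀ : 0 ≤ c₀) (hc₁ : 0 ≤ c₁) (hc₂ : 0 ≤ c₂)
    (hJ_bdd : ∀ w v : X, ∀ ξ ∈ clarkeSubdiff (J w) v, ‖ξ‖ ≤ c₀ + c₁ * ‖v‖ + c₂ * ‖w‖)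
    (m_α m_L : ℝ) (hm_α : 0 ≤ m_α) (hm_L : 0 ≤ m_L)
    (hJ_mono : ∀ w₁ w₂ v₁ v₂ : X,
      clarkeDeriv (J w₁) v₁ (v₂ - v₁) + clarkeDeriv (J w₂) v₂ (v₁ - v₂)
        ≤ m_α * ‖v₁ - v₂‖ ^ 2 + m_L * ‖w₁ - w₂‖ * ‖v₁ - v₂‖)
    (γ : V →L[ℝ] X) (f : V →L[ℝ] ℝ)
    (hs : (m_α + m_L) * ‖γ‖ ^ 2 < m_A)
    (u : V)
    (hu : (0 : V →L[ℝ] ℝ) ∈ clarkeSubdiff (fun v : V => F_A v - f v + J (γ u) (γ v)) u) :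
    ∃ z ∈ clarkeSubdiff (J (γ u)) (γ u), ∀ v : V, A u v + z (γ v) = f v := by
  classical
  set x₀ : X := γ u with hx₀
  set j : X → ℝ := J (γ u) with hj
  set l : Filter (X × ℝ) := (𝓝 x₀) ×ˢ (𝓝[>] (0:ℝ)) with hl
  set lV : Filter (V × ℝ) := (𝓝 u) ×ˢ (𝓝[>] (0:ℝ)) with hlV
  haveI hlne : l.NeBot := by rw [hl]; infer_instance
  haveI hlVne : lV.NeBot := by rw [hlV]; infer_instance
  set Q : X → X × ℝ → ℝ := fun d q => (j (q.1 + q.2 • d) - j q.1) / q.2 with hQ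
  have hQdef : ∀ d, clarkeDeriv j x₀ d = limsup (Q d) l := fun d => rfl
  -- Lipschitz data around x₀
  obtain ⟨K, t, ht, hKt⟩ := hJ_lip (γ u) x₀
  obtain ⟨r, hr, hball⟩ := Metric.mem_nhds_iff.1 ht
  have hKl : LipschitzOnWith K j (Metric.ball x₀ r) := hKt.mono hball
  have hev : ∀ d : X, ∀ᶠ q in l, |Q d q| ≤ (K : ℝ) * ‖d‖ := fun d =>
    clarke_ev_bound hr hKl d
  have hbddA : ∀ d, IsBoundedUnder (· ≤ ·) l (Q d) := fun d =>
    isBoundedUnder_of_eventually_le ((hev d).mono fun q h => (abs_le.1 h).2)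
  have hbddB : ∀ d, IsBoundedUnder (· ≥ ·) l (Q d) := fun d =>
    isBoundedUnder_of_eventually_ge ((hev d).mono fun q h => (abs_le.1 h).1)
  have hcob : ∀ d, IsCoboundedUnder (· ≤ ·) l (Q d) := fun d =>
    (hbddB d).isCoboundedUnder_le
  have hple : ∀ d, clarkeDeriv j x₀ d ≤ (K:ℝ) * ‖d‖ := fun d =>
    limsup_le_of_le (hcob d) ((hev d).mono fun q h => (abs_le.1 h).2)
  -- p(0) = 0
  have hp0 : clarkeDeriv j x₀ (0:X) = 0 := by
    have hfun : (fun q : X × ℝ => (j (q.1 + q.2 • (0:X)) - j q.1) / q.2)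
        = fun _ : X × ℝ => (0:ℝ) := by
      funext q; simp
    rw [clarkeDeriv]
    rw [hfun]
    exact limsup_const 0
  -- subadditivity
  have hp_add : ∀ x y : X,
      clarkeDeriv j x₀ (x + y) ≤ clarkeDeriv j x₀ x + clarkeDeriv j x₀ y := by
    intro x y
    set φ : X × ℝ → X × ℝ := fun q => (q.1 + q.2 • x, q.2) with hφ
    have hφt : Tendsto φ l l := by
      rw [hl]
      have h1 : Tendsto (fun q : X × ℝ => q.1 + q.2 • x) ((𝓝 x₀) ×ˢ (𝓝[>] (0:ℝ)))
          (𝓝 x₀) := by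
        have h2 : Tendsto (fun q : X × ℝ => q.2 • x) ((𝓝 x₀) ×ˢ (𝓝[>] (0:ℝ)))
            (𝓝 ((0:ℝ) • x)) :=
          (tendsto_snd.mono_right nhdsWithin_le_nhds).smul_const x
        have := tendsto_fst.add h2
        simpa using this
      exact h1.prodMk tendsto_snd
    have key : Q (x + y) = fun q => Q y (φ q) + Q x q := by
      funext q
      simp only [hQ, hφ]
      have e1 : q.1 + q.2 • (x + y) = (q.1 + q.2 • x) + q.2 • y := by
        rw [smul_add, add_assoc]
      rw [e1, ← add_div, sub_add_sub_cancel]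
    have hQyφ_ev : ∀ᶠ q in l, |Q y (φ q)| ≤ (K:ℝ) * ‖y‖ := hφt.eventually (hev y)
    have h₁ : IsBoundedUnder (· ≥ ·) l (fun q => Q y (φ q)) :=
      isBoundedUnder_of_eventually_ge (hQyφ_ev.mono fun q h => (abs_le.1 h).1)
    have h₂ : IsBoundedUnder (· ≤ ·) l (fun q => Q y (φ q)) :=
      isBoundedUnder_of_eventually_le (hQyφ_ev.mono fun q h => (abs_le.1 h).2)
    have step1 : limsup (fun q => Q y (φ q) + Q x q) l
        ≤ limsup (fun q => Q y (φ q)) l + limsup (Q x) l :=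
      limsup_add_le h₁ h₂ (hcob x) (hbddA x)
    have step2 : limsup (fun q => Q y (φ q)) l ≤ clarkeDeriv j x₀ y := by
      have e2 : limsup (fun q => Q y (φ q)) l = limsup (Q y) (Filter.map φ l) :=
        (limsup_map_eq' φ (Q y) l).symm
      rw [e2, hQdef]
      refine limsup_le_limsup_of_le hφt ?_ (hbddA y)
      exact (isBoundedUnder_of_eventually_ge
        (((hev y).filter_mono hφt).mono fun q h => (abs_le.1 h).1)).isCoboundedUnder_le
    calc clarkeDeriv j x₀ (x + y) = limsup (fun q => Q y (φ q) + Q x q) l := by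
          rw [hQdef, key]
      _ ≤ limsup (fun q => Q y (φ q)) l + limsup (Q x) l := step1
      _ ≤ clarkeDeriv j x₀ y + clarkeDeriv j x₀ x :=
          add_le_add step2 (le_of_eq (hQdef x).symm)
      _ = clarkeDeriv j x₀ x + clarkeDeriv j x₀ y := add_comm _ _
  -- positive homogeneity
  have hp_smul : ∀ c : ℝ, 0 < c → ∀ x : X,
      clarkeDeriv j x₀ (c • x) = c * clarkeDeriv j x₀ x := by
    intro c hc x
    set ψ : X × ℝ → X × ℝ := fun q => (q.1, c * q.2) with hψ
    have hmapψ : Filter.map ψ l = l := by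
      have hψ' : Filter.map ψ l = Filter.map id (𝓝 x₀) ×ˢ Filter.map (fun s => c * s) (𝓝[>] (0:ℝ)) := by
        rw [Filter.prod_map_map_eq, hl]; rfl
      rw [hψ', Filter.map_id, map_mul_nhdsWithin_Ioi hc]
    have key : Q (c • x) = fun q => c * Q x (ψ q) := by
      funext q
      simp only [hQ, hψ]
      have e1 : q.2 • (c • x) = (c * q.2) • x := by rw [smul_smul, mul_comm]
      rw [e1, mul_div_assoc', mul_div_mul_left _ _ hc.ne']
    have hevψ : ∀ᶠ q in l, |Q x (ψ q)| ≤ (K:ℝ) * ‖x‖ := by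
      have h6 := hev x
      rw [← hmapψ] at h6
      exact Filter.eventually_map.1 h6
    have hb : IsBoundedUnder (· ≤ ·) l (fun q => Q x (ψ q)) :=
      isBoundedUnder_of_eventually_le (hevψ.mono fun q h => (abs_le.1 h).2)
    have hcb : IsCoboundedUnder (· ≤ ·) l (fun q => Q x (ψ q)) :=
      (isBoundedUnder_of_eventually_ge
        (hevψ.mono fun q h => (abs_le.1 h).1)).isCoboundedUnder_le
    have hmono : Monotone (fun z : ℝ => c * z) := fun a b h =>
      mul_le_mul_of_nonneg_left h hc.le
    calc clarkeDeriv j x₀ (c • x) = limsup (fun q => c * Q x (ψ q)) l := by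
          rw [hQdef, key]
      _ = c * limsup (fun q => Q x (ψ q)) l :=
          (hmono.map_limsup_of_continuousAt (fun q => Q x (ψ q))
            ((continuous_mul_left c).continuousAt) hb hcb).symm
      _ = c * limsup (Q x) (Filter.map ψ l) := by rw [limsup_map_eq']; rfl
      _ = c * clarkeDeriv j x₀ x := by rw [hmapψ, hQdef]
  -- the key inequality : f v - A u v ≤ p (γ v)
  have hu' : ∀ v : V, (0:ℝ) ≤ clarkeDeriv (fun y => F_A y - f y + J (γ u) (γ y)) u v := by
    intro v
    have := hu v
    simpa using this
  have hkey : ∀ v : V, f v - A u v ≤ clarkeDeriv j x₀ (γ v) := by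
    intro v
    set φV : V × ℝ → X × ℝ := fun q => (γ q.1, q.2) with hφV
    have hφVt : Tendsto φV lV l := by
      rw [hlV, hl]
      exact ((γ.continuous.tendsto u).comp tendsto_fst).prodMk tendsto_snd
    have hpos : ∀ᶠ q : V × ℝ in lV, q.2 ∈ Set.Ioi (0:ℝ) := by
      rw [hlV]
      exact Filter.Eventually.prod_mk (Eventually.of_forall fun _ => trivial)
        self_mem_nhdsWithin |>.mono fun q h => h.2
    have hg_ev : ∀ᶠ q in lV, |Q (γ v) (φV q)| ≤ (K:ℝ) * ‖γ v‖ :=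
      hφVt.eventually (hev (γ v))
    set QL : V × ℝ → ℝ := fun q =>
      ((fun y => F_A y - f y + J (γ u) (γ y)) (q.1 + q.2 • v)
        - (fun y => F_A y - f y + J (γ u) (γ y)) q.1) / q.2 with hQL
    have hQLdef : clarkeDeriv (fun y => F_A y - f y + J (γ u) (γ y)) u v = limsup QL lV :=
      rfl
    have hQLeq : ∀ᶠ q in lV, QL q
        = ((F_A (q.1 + q.2 • v) - F_A q.1) / q.2 - f v) + Q (γ v) (φV q) := by
      filter_upwards [hpos] with q hq
      have hq' : q.2 ≠ 0 := ne_of_gt hq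
      have e1 : γ (q.1 + q.2 • v) = γ q.1 + q.2 • γ v := by
        rw [map_add, map_smul]
      simp only [hQL, hQ, hφV, e1, map_add, map_smul, smul_eq_mul]
      field_simp
      ring
    have hT : Tendsto (fun q : V × ℝ => (F_A (q.1 + q.2 • v) - F_A q.1) / q.2 - f v)
        lV (𝓝 (A u v - f v)) :=
      (QF_tendsto A F_A L_A hL_A hA_lip hA_pot u v).sub_const (f v)
    have h0le := hu' v
    rw [hQLdef, limsup_congr hQLeq] at h0le
    have hle : limsup (fun q =>
        ((F_A (q.1 + q.2 • v) - F_A q.1) / q.2 - f v) + Q (γ v) (φV q)) lV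
        ≤ limsup (fun q : V × ℝ => (F_A (q.1 + q.2 • v) - F_A q.1) / q.2 - f v) lV
          + limsup (fun q => Q (γ v) (φV q)) lV :=
      limsup_add_le hT.isBoundedUnder_ge hT.isBoundedUnder_le
        ((isBoundedUnder_of_eventually_ge
          (hg_ev.mono fun q h => (abs_le.1 h).1)).isCoboundedUnder_le)
        (isBoundedUnder_of_eventually_le (hg_ev.mono fun q h => (abs_le.1 h).2))
    have hlimT : limsup (fun q : V × ℝ => (F_A (q.1 + q.2 • v) - F_A q.1) / q.2 - f v) lV
        = A u v - f v := hT.limsup_eq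
    have hlimg : limsup (fun q => Q (γ v) (φV q)) lV ≤ clarkeDeriv j x₀ (γ v) := by
      have e2 : limsup (fun q => Q (γ v) (φV q)) lV
          = limsup (Q (γ v)) (Filter.map φV lV) := (limsup_map_eq' φV (Q (γ v)) lV).symm
      rw [e2, hQdef]
      refine limsup_le_limsup_of_le hφVt ?_ (hbddA (γ v))
      exact (isBoundedUnder_of_eventually_ge
        (((hev (γ v)).filter_mono hφVt).mono fun q h => (abs_le.1 h).1)).isCoboundedUnder_le
    have hfinal : limsup (fun q : V × ℝ => (F_A (q.1 + q.2 • v) - F_A q.1) / q.2 - f v) lV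
          + limsup (fun q => Q (γ v) (φV q)) lV
        ≤ A u v - f v + clarkeDeriv j x₀ (γ v) := by
      rw [hlimT]
      exact add_le_add_right hlimg _
    linarith [le_trans h0le (le_trans hle hfinal)]
  -- construction of z via Hahn-Banach
  set g : V →ₗ[ℝ] ℝ := ((f - A u : V →L[ℝ] ℝ) : V →ₗ[ℝ] ℝ) with hg
  set γ' : V →ₗ[ℝ] X := (γ : V →ₗ[ℝ] X) with hγ'
  have hgapp : ∀ v : V, g v = f v - A u v := fun v => rfl
  have hker : LinearMap.ker γ' ≤ LinearMap.ker g := by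
    intro v hv
    rw [LinearMap.mem_ker] at hv ⊢
    have hγv : γ v = 0 := hv
    have e1 : clarkeDeriv j x₀ (γ v) = 0 := by rw [hγv]; exact hp0
    have e2 : clarkeDeriv j x₀ (γ (-v)) = 0 := by rw [map_neg, hγv, neg_zero]; exact hp0
    have h1 := hkey v; rw [e1] at h1
    have h2 := hkey (-v); rw [e2] at h2
    simp only [map_neg] at h2
    rw [hgapp]
    linarith
  set ℓ : LinearMap.range γ' →ₗ[ℝ] ℝ :=
    (Submodule.liftQ (LinearMap.ker γ') g hker).comp
      γ'.quotKerEquivRange.symm.toLinearMap with hℓdef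
  have hℓ : ∀ (v : V) (hvv : γ' v ∈ LinearMap.range γ'),
      ℓ ⟨γ' v, hvv⟩ = f v - A u v := by
    intro v hvv
    rw [hℓdef]
    simp only [LinearMap.coe_comp, Function.comp_apply, LinearEquiv.coe_coe]
    rw [LinearMap.quotKerEquivRange_symm_apply_image]
    rw [Submodule.mkQ_apply, Submodule.liftQ_apply]
    exact hgapp v
  have hfle : ∀ x : (LinearMap.range γ'), ℓ x ≤ clarkeDeriv j x₀ (x : X) := by
    rintro ⟨xx, hxx⟩
    obtain ⟨v, rfl⟩ := hxx
    rw [hℓ v (LinearMap.mem_range_self γ' v)]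
    exact hkey v
  obtain ⟨z₀, hz₀ext, hz₀le⟩ :=
    exists_extension_of_le_sublinear ⟨LinearMap.range γ', ℓ⟩ (clarkeDeriv j x₀)
      (fun c hc x => hp_smul c hc x) hp_add hfle
  have hz₀bound : ∀ x : X, ‖z₀ x‖ ≤ (K:ℝ) * ‖x‖ := by
    intro x
    rw [Real.norm_eq_abs, abs_le]
    constructor
    · have h1 : z₀ (-x) ≤ clarkeDeriv j x₀ (-x) := hz₀le (-x)
      have h2 : clarkeDeriv j x₀ (-x) ≤ (K:ℝ) * ‖x‖ := by
        have := hple (-x); rwa [norm_neg] at this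
      rw [map_neg] at h1
      linarith
    · exact le_trans (hz₀le x) (hple x)
  set z : X →L[ℝ] ℝ := z₀.mkContinuous ((K:ℝ)) hz₀bound with hz
  refine ⟨z, ?_, ?_⟩
  · intro d
    show z₀ d ≤ clarkeDeriv j x₀ d
    exact hz₀le d
  · intro v
    have h2 : z₀ (γ v) = ℓ ⟨γ' v, LinearMap.mem_range_self γ' v⟩ :=
      hz₀ext ⟨γ' v, LinearMap.mem_range_self γ' v⟩
    have h3 : z (γ v) = z₀ (γ v) := rfl
    rw [h3, h2, hℓ v (LinearMap.mem_range_self γ' v)]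
    ring
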